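/- arXiv:1801.00150 — 2 statements merged into one kernel-verified Lean document; each statement's English description precedes it below -/
import Mathlib

section
/- Let f be an h-reversible C¹ diffeomorphism of ℝ² with |det Dh| ≡ 1, and let x be a periodic point of f with period n lying on Fix(h) (h x = x). Then |det D(f^[n])(x)| = 1. -/
/-- For an `h`-reversible C¹ diffeomorphism `f` of `ℝ²` with
`|det Dh| ≡ 1`, every periodic point `x` of period `n ≥ 1` lying on `Fix(h)`
has `|det D(f^[n])(x)| = 1`. -/
theorem stmt4 (f g h : ℝ × ℝ → ℝ × ℝ)
    (hf : ContDiff ℝ 1 f) (hg : ContDiff ℝ 1 g) (hh : ContDiff ℝ 1 h)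
    (hgf : Function.LeftInverse g f) (hfg : Function.RightInverse g f)
    (hinv : ∀ y, h (h y) = y)
    (hdet : ∀ y, |(fderiv ℝ h y).det| = 1)
    (hrev : h ∘ f = g ∘ h)
    (n : ℕ) (hn : 1 ≤ n)
    (x : ℝ × ℝ) (hx : f^[n] x = x) (hhx : h x = x) :
    |(fderiv ℝ (f^[n]) x).det| = 1 := by
  have hfd : Differentiable ℝ f := hf.differentiable one_ne_zero
  have hgd : Differentiable ℝ g := hg.differentiable one_ne_zero
  have hhd : Differentiable ℝ h := hh.differentiable one_ne_zero
  have hfn : Differentiable ℝ (f^[n]) := hfd.iterate n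
  have hgn : Differentiable ℝ (g^[n]) := hgd.iterate n
  -- g^[n] ∘ f^[n] = id
  have hli : Function.LeftInverse (g^[n]) (f^[n]) := hgf.iterate n
  have hcomp : g^[n] ∘ f^[n] = id := funext hli
  have h1 : (fderiv ℝ (g^[n]) x).det * (fderiv ℝ (f^[n]) x).det = 1 := by
    have e := fderiv_comp (x := x) (hgn.differentiableAt) (hfn.differentiableAt)
    rw [hcomp, fderiv_id, hx] at e
    have hdet' := congrArg ContinuousLinearMap.det e
    simpa [ContinuousLinearMap.det, ContinuousLinearMap.coe_comp,
      LinearMap.det_comp] using hdet'.symm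
  -- h ∘ f^[n] = g^[n] ∘ h
  have hsc : Function.Semiconj h f g := fun y => congrFun hrev y
  have hscn : Function.Semiconj h (f^[n]) (g^[n]) := hsc.iterate_right n
  have h2eq : h ∘ f^[n] = g^[n] ∘ h := funext hscn
  have h2 : |(fderiv ℝ (f^[n]) x).det| = |(fderiv ℝ (g^[n]) x).det| := by
    have e1 := fderiv_comp (x := x) (hhd.differentiableAt) (hfn.differentiableAt)
    have e2 := fderiv_comp (x := x) (hgn.differentiableAt) (hhd.differentiableAt)
    rw [h2eq] at e1
    rw [e1, hx, hhx] at e2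
    have e3 := congrArg ContinuousLinearMap.det e2
    simp only [ContinuousLinearMap.det, ContinuousLinearMap.coe_comp,
      LinearMap.det_comp] at e3
    simp only [show ∀ A B : ℝ × ℝ →L[ℝ] ℝ × ℝ, LinearMap.det (↑(A ∘SL B) : ℝ × ℝ →ₗ[ℝ] ℝ × ℝ) = A.det * B.det from fun A B => LinearMap.det_comp _ _] at e3
    have e4 := congrArg abs e3
    rw [abs_mul, abs_mul, hdet x] at e4
    simpa using e4
  have h1' : |(fderiv ℝ (g^[n]) x).det| * |(fderiv ℝ (f^[n]) x).det| = 1 := by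
    rw [← abs_mul, h1, abs_one]
  rw [← h2] at h1'
  nlinarith [abs_nonneg (fderiv ℝ (f^[n]) x).det]
end

section
/- The vector field of the two-vortex system X(R, S, φ) = ( (1/2) A R sin 2φ − ε sin φ sin S sin(R sin φ), −1 + ε cos S cos(R sin φ), κ/R² + A cos²φ − (ε/R) cos φ sin S sin(R sin φ) ) is reversible under the involution H₁ : (R, S, φ, t) ↦ (R, −S, −φ, −t); that is, if G(R,S,φ) = (R, −S, −φ) then DG(X(p)) = −X(G(p)) for all p with R ≠ 0. -/
open Real

/-- The two-vortex vector field is reversible under the involution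
`G : (R, S, φ) ↦ (R, −S, −φ)`: `G(X(p)) = −X(G(p))` for `R ≠ 0`. -/
theorem stmt9 (A ε κ : ℝ) (X G : ℝ × ℝ × ℝ → ℝ × ℝ × ℝ)
    (hX : ∀ R S φ : ℝ, X (R, S, φ) =
      ((1/2) * A * R * sin (2*φ) - ε * sin φ * sin S * sin (R * sin φ),
       -1 + ε * cos S * cos (R * sin φ),
       κ / R^2 + A * (cos φ)^2 - (ε / R) * cos φ * sin S * sin (R * sin φ)))
    (hG : ∀ R S φ : ℝ, G (R, S, φ) = (R, -S, -φ)) :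
    ∀ p : ℝ × ℝ × ℝ, p.1 ≠ 0 → G (X p) = - X (G p) := by
  rintro ⟨R, S, φ⟩ -
  rw [hX, hG, hX, hG, Prod.neg_mk, Prod.neg_mk, Prod.mk.injEq, Prod.mk.injEq]
  simp [mul_neg, neg_mul, Real.sin_neg, Real.cos_neg]
  ring
end
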